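/- Let L(s, λ, t) := sup_{μ ∈ ℝ} (λμ − H(s, t, μ)) be the Lagrangian associated to H. Then for every T > 0 there exist constants α̂_T, β̂_T ≥ 0 and ε̂_T ∈ (0, T] such that L(s, λ, t₁) − L(s, λ, t₂) ≤ (α̂_T |λ| + β̂_T) |t₂ − t₁| whenever t₁, t₂ ∈ [0, T], |t₂ − t₁| < ε̂_T, s ∈ [0, ℓ] and λ ∈ ℝ. -/

import Mathlib

open Set Filter MeasureTheory

/-- The Lagrangian associated to a Hamiltonian: `L(s, λ, t) = sup_{μ ∈ ℝ} (λμ − H(s, t, μ))`. -/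
noncomputable def Lagrangian (H : ℝ → ℝ → ℝ → ℝ) (s lam t : ℝ) : ℝ :=
  sSup (Set.range fun μ => lam * μ - H s t μ)

/-- Superlinear coercivity: `f r / r → ∞` as `r → ∞`. -/
def Superlinear (f : ℝ → ℝ) : Prop :=
  Tendsto (fun r => f r / r) atTop atTop

/-- `ϑ, Θ` are nondecreasing, convex, superlinearly coercive functions bounding `H` from
below and above on `[0, ℓ] × [0, T] × ℝ`. -/
def CoerciveBounds (H : ℝ → ℝ → ℝ → ℝ) (ℓ T : ℝ) (ϑ Θ : ℝ → ℝ) : Prop :=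
  MonotoneOn ϑ (Ici 0) ∧ ConvexOn ℝ (Ici 0) ϑ ∧ Superlinear ϑ ∧
  MonotoneOn Θ (Ici 0) ∧ ConvexOn ℝ (Ici 0) Θ ∧ Superlinear Θ ∧
  ∀ s ∈ Icc 0 ℓ, ∀ μ : ℝ, ∀ t ∈ Icc 0 T, ϑ |μ| ≤ H s t μ ∧ H s t μ ≤ Θ |μ|

/-- Auxiliary: a superlinear, monotone lower bound makes the Lagrangian integrand
bounded above. -/
lemma bddAbove_lagrangian_range (ϑ : ℝ → ℝ) (hm : MonotoneOn ϑ (Ici 0))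
    (hsl : Superlinear ϑ) (lam : ℝ) (f : ℝ → ℝ) (hf : ∀ μ, ϑ |μ| ≤ f μ) :
    BddAbove (Set.range fun μ => lam * μ - f μ) := by
  obtain ⟨R, hR⟩ := (hsl.eventually_ge_atTop (|lam| + 1)).exists_forall_of_atTop
  set R' := max R 1 with hR'
  refine ⟨max 0 (|lam| * R' - ϑ 0), ?_⟩
  rintro x ⟨μ, rfl⟩
  have hlm : lam * μ ≤ |lam| * |μ| := by
    calc lam * μ ≤ |lam * μ| := le_abs_self _
    _ = |lam| * |μ| := abs_mul _ _
  rcases le_or_gt |μ| R' with h | h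
  · have h0 : ϑ 0 ≤ ϑ |μ| := hm (Set.mem_Ici.mpr (le_refl 0)) (Set.mem_Ici.mpr (abs_nonneg μ)) (abs_nonneg μ)
    have : lam * μ - f μ ≤ |lam| * R' - ϑ 0 := by
      have := hf μ
      have h1 : |lam| * |μ| ≤ |lam| * R' := by
        exact mul_le_mul_of_nonneg_left h (abs_nonneg lam)
      linarith
    exact le_trans this (le_max_right _ _)
  · have hμ1 : (1:ℝ) ≤ |μ| := le_trans (le_max_right R 1) h.le
    have hμ0 : (0:ℝ) < |μ| := lt_of_lt_of_le one_pos hμ1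
    have hge : |lam| + 1 ≤ ϑ |μ| / |μ| := hR |μ| (le_trans (le_max_left R 1) h.le)
    have hge' : (|lam| + 1) * |μ| ≤ ϑ |μ| := by
      rw [← le_div_iff₀ hμ0]; exact hge
    have : lam * μ - f μ ≤ 0 := by
      have := hf μ
      nlinarith
    exact le_trans this (le_max_left _ _)

/-- the Lagrangian inherits a Lipschitz-type condition in the time variable. -/
theorem lagrangian_time_lipschitz (ℓ : ℝ) (hℓ : 0 < ℓ) (H : ℝ → ℝ → ℝ → ℝ)
    (Hcont : ContinuousOn (fun p : ℝ × ℝ × ℝ => H p.1 p.2.1 p.2.2)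
      (Icc 0 ℓ ×ˢ Ici 0 ×ˢ univ))
    (Hconv : ∀ s ∈ Icc 0 ℓ, ∀ t ∈ Ici (0:ℝ), ConvexOn ℝ univ (fun μ => H s t μ))
    (Hcoer : ∀ T > (0:ℝ), ∃ ϑ Θ : ℝ → ℝ, CoerciveBounds H ℓ T ϑ Θ)
    (Htlip : ∀ T > (0:ℝ), ∃ α β : ℝ, 0 ≤ α ∧ 0 ≤ β ∧ ∃ ε ∈ Ioc 0 T,
      ∀ s ∈ Icc 0 ℓ, ∀ μ : ℝ, ∀ t₁ ∈ Icc 0 T, ∀ t₂ ∈ Icc 0 T, |t₂ - t₁| < ε →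
        H s t₁ μ - H s t₂ μ ≤ (α * (H s t₂ μ / (1 + |μ|)) + β) * |t₂ - t₁|) :
    ∀ T > (0:ℝ), ∃ αh βh : ℝ, 0 ≤ αh ∧ 0 ≤ βh ∧ ∃ εh ∈ Ioc 0 T,
      ∀ s ∈ Icc 0 ℓ, ∀ lam : ℝ, ∀ t₁ ∈ Icc 0 T, ∀ t₂ ∈ Icc 0 T, |t₂ - t₁| < εh →
        Lagrangian H s lam t₁ - Lagrangian H s lam t₂ ≤ (αh * |lam| + βh) * |t₂ - t₁| := by
  intro T hT
  obtain ⟨ϑ, Θ, hϑm, hϑc, hϑs, hΘm, hΘc, hΘs, hbd⟩ := Hcoer T hT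
  obtain ⟨α, β, hα, hβ, ε, hε, hlip⟩ := Htlip T hT
  set C : ℝ := max (Θ 0) 0 + 1 with hCdef
  have hC1 : (1:ℝ) ≤ C := by
    have := le_max_right (Θ 0) 0; simp only [hCdef]; linarith
  have hC0 : (0:ℝ) ≤ C := by linarith
  refine ⟨α, α * C + β, hα, by nlinarith, ε, hε, ?_⟩
  intro s hs lam t₁ ht₁ t₂ ht₂ hd
  have hbd1 : ∀ μ, ϑ |μ| ≤ H s t₁ μ := fun μ => (hbd s hs μ t₁ ht₁).1
  have hbd2 : ∀ μ, ϑ |μ| ≤ H s t₂ μ := fun μ => (hbd s hs μ t₂ ht₂).1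
  have hBA2 : BddAbove (Set.range fun μ => lam * μ - H s t₂ μ) :=
    bddAbove_lagrangian_range ϑ hϑm hϑs lam _ hbd2
  have hL2 : ∀ μ, lam * μ - H s t₂ μ ≤ Lagrangian H s lam t₂ :=
    fun μ => le_csSup hBA2 ⟨μ, rfl⟩
  have hRHS0 : 0 ≤ (α * |lam| + (α * C + β)) * |t₂ - t₁| := by
    have h1 : 0 ≤ α * |lam| := mul_nonneg hα (abs_nonneg _)
    have h2 : 0 ≤ α * C := mul_nonneg hα hC0
    have := abs_nonneg (t₂ - t₁)
    nlinarith
  have key : ∀ μ : ℝ, lam * μ - H s t₁ μ ≤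
      Lagrangian H s lam t₂ + (α * |lam| + (α * C + β)) * |t₂ - t₁| := by
    intro μ
    have hlm : lam * μ ≤ |lam| * |μ| := by
      calc lam * μ ≤ |lam * μ| := le_abs_self _
      _ = |lam| * |μ| := abs_mul _ _
    by_cases hcase : H s t₁ μ ≤ |lam| * |μ| + C
    · -- near-maximizer regime: use the time-Lipschitz estimate with the roles swapped
      have hpos : (0:ℝ) < 1 + |μ| := by have := abs_nonneg μ; linarith
      have hdiv : H s t₁ μ / (1 + |μ|) ≤ |lam| + C := by
        rw [div_le_iff₀ hpos]
        have h1 : 0 ≤ |lam| := abs_nonneg lam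
        have h2 : 0 ≤ C * |μ| := mul_nonneg hC0 (abs_nonneg μ)
        nlinarith
      have h1 := hlip s hs μ t₂ ht₂ t₁ ht₁ (by rwa [abs_sub_comm])
      -- h1 : H s t₂ μ - H s t₁ μ ≤ (α * (H s t₁ μ / (1 + |μ|)) + β) * |t₁ - t₂|
      have h2 : (α * (H s t₁ μ / (1 + |μ|)) + β) * |t₁ - t₂| ≤
          (α * |lam| + (α * C + β)) * |t₂ - t₁| := by
        rw [abs_sub_comm]
        have h3 : α * (H s t₁ μ / (1 + |μ|)) + β ≤ α * |lam| + (α * C + β) := by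
          have := mul_le_mul_of_nonneg_left hdiv hα
          nlinarith
        exact mul_le_mul_of_nonneg_right h3 (abs_nonneg _)
      have h4 := h1.trans h2
      have h5 := hL2 μ
      linarith [h4, h5]
    · -- far regime: the value is below the μ = 0 value at t₂
      push_neg at hcase
      have h0 : lam * 0 - H s t₂ 0 ≤ Lagrangian H s lam t₂ := hL2 0
      have hΘ0 : H s t₂ 0 ≤ Θ 0 := by
        have := (hbd s hs 0 t₂ ht₂).2
        rwa [abs_zero] at this
      have hmax : Θ 0 ≤ max (Θ 0) 0 := le_max_left _ _
      have : lam * μ - H s t₁ μ < 1 - C := by nlinarith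
      have hC' : (1:ℝ) - C ≤ -(Θ 0) := by
        simp only [hCdef] at *
        linarith
      nlinarith [hL2 0]
  have hne : (Set.range fun μ => lam * μ - H s t₁ μ).Nonempty := ⟨_, ⟨0, rfl⟩⟩
  have : Lagrangian H s lam t₁ ≤
      Lagrangian H s lam t₂ + (α * |lam| + (α * C + β)) * |t₂ - t₁| := by
    apply csSup_le hne
    rintro x ⟨μ, rfl⟩
    exact key μ
  linarith
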